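/- For s < T, the operator T_s = Q_{T-s}^{-1/2} S_{T-s} Q̂_s S_{T-s}^* Q_{T-s}^{-1/2} satisfies the identity T_s = I − Q_{T-s}^{1/2} Q_T^{-1} Q_{T-s}^{1/2}; in particular T_s is bounded with 0 ≤ T_s ≤ I. -/

import Mathlib

set_option maxHeartbeats 1000000
open ContinuousLinearMap
open scoped RealInnerProductSpace

section Aux

variable {H : Type*} [NormedAddCommGroup H] [InnerProductSpace ℝ H] [CompleteSpace H]

lemma aux_denseRange {A : H →L[ℝ] H} (hA : IsSelfAdjoint A)
    (hinj : Function.Injective A) : DenseRange A := by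
  have hadj : ContinuousLinearMap.adjoint A = A := hA
  have htop : (LinearMap.range (A : H →ₗ[ℝ] H)).topologicalClosure = ⊤ := by
    rw [Submodule.topologicalClosure_eq_top_iff]
    rw [Submodule.eq_bot_iff]
    intro x hx
    have hx' : ∀ y : H, ⟪A y, x⟫ = 0 := fun y =>
      hx (A y) (LinearMap.mem_range_self _ y)
    have hAx : A x = 0 := by
      have h1 : ⟪A (A x), x⟫ = 0 := hx' (A x)
      have h2 := ContinuousLinearMap.adjoint_inner_left A x (A x)
      rw [hadj] at h2
      rw [h2] at h1
      exact inner_self_eq_zero.mp h1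
    exact hinj (by simpa using hAx)
  have : Dense (LinearMap.range (A : H →ₗ[ℝ] H) : Set H) :=
    Submodule.dense_iff_topologicalClosure_eq_top.mpr htop
  simpa [DenseRange, LinearMap.coe_range] using this

lemma aux_cancel_right {A B C : H →L[ℝ] H} (hC : DenseRange C)
    (h : A.comp C = B.comp C) : A = B := by
  have hfun : (⇑A) ∘ C = (⇑B) ∘ C := by
    ext x
    exact DFunLike.congr_fun h x
  have := hC.equalizer A.continuous B.continuous hfun
  exact ContinuousLinearMap.ext fun x => congrFun this x

lemma aux_cancel_left {A B C : H →L[ℝ] H} (hC : Function.Injective C)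
    (h : C.comp A = C.comp B) : A = B := by
  ext x
  exact hC (DFunLike.congr_fun h x)

end Aux

theorem Ts_identity
    {H : Type*} [NormedAddCommGroup H] [InnerProductSpace ℝ H] [CompleteSpace H]
    {s T : ℝ} (hs : 0 ≤ s) (hsT : s < T)
    (Sop : ℝ → H →L[ℝ] H)
    (Qs QTms QT Qshalf QTmshalf QThalf Vs Qhat Qhathalf M J : H →L[ℝ] H)
    (hQshalf_sa : IsSelfAdjoint Qshalf) (hQTmshalf_sa : IsSelfAdjoint QTmshalf)
    (hQThalf_sa : IsSelfAdjoint QThalf) (hQhathalf_sa : IsSelfAdjoint Qhathalf)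
    (hQshalf_sq : Qshalf.comp Qshalf = Qs) (hQTmshalf_sq : QTmshalf.comp QTmshalf = QTms)
    (hQThalf_sq : QThalf.comp QThalf = QT) (hQhathalf_sq : Qhathalf.comp Qhathalf = Qhat)
    (hVs : QThalf.comp Vs = (Sop (T - s)).comp Qshalf)
    (hQhat : Qhat = Qs - (Qshalf.comp ((ContinuousLinearMap.adjoint Vs).comp Vs)).comp Qshalf)
    (hid : QT = QTms + (Sop (T - s)).comp (Qs.comp (ContinuousLinearMap.adjoint (Sop (T - s)))))
    (hM : QTmshalf.comp M = (Sop (T - s)).comp Qhathalf)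
    (hJ : QThalf.comp J = QTmshalf)
    (hQTmshalf_inj : Function.Injective QTmshalf)
    (hQThalf_inj : Function.Injective QThalf) :
    M.comp (ContinuousLinearMap.adjoint M) =
        (1 : H →L[ℝ] H) - (ContinuousLinearMap.adjoint J).comp J ∧
      (M.comp (ContinuousLinearMap.adjoint M)).IsPositive ∧
      ((1 : H →L[ℝ] H) - M.comp (ContinuousLinearMap.adjoint M)).IsPositive := by
  set S := Sop (T - s) with hS
  -- abbreviations: work with `*` = comp in the ring of CLMs
  have hmul : ∀ A B : H →L[ℝ] H, A.comp B = A * B := fun _ _ => rfl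
  -- self-adjointness as adjoint equations
  have asa : ContinuousLinearMap.adjoint Qshalf = Qshalf := hQshalf_sa
  have bsa : ContinuousLinearMap.adjoint QTmshalf = QTmshalf := hQTmshalf_sa
  have csa : ContinuousLinearMap.adjoint QThalf = QThalf := hQThalf_sa
  have dsa : ContinuousLinearMap.adjoint Qhathalf = Qhathalf := hQhathalf_sa
  have hdenseTm : DenseRange QTmshalf := aux_denseRange hQTmshalf_sa hQTmshalf_inj
  have hdenseT : DenseRange QThalf := aux_denseRange hQThalf_sa hQThalf_inj
  -- adjoint versions
  have hVs' : (ContinuousLinearMap.adjoint Vs) * QThalf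
      = Qshalf * (ContinuousLinearMap.adjoint S) := by
    have := congrArg ContinuousLinearMap.adjoint hVs
    rw [ContinuousLinearMap.adjoint_comp, ContinuousLinearMap.adjoint_comp, csa, asa] at this
    simpa [hmul] using this
  have hM' : (ContinuousLinearMap.adjoint M) * QTmshalf
      = Qhathalf * (ContinuousLinearMap.adjoint S) := by
    have := congrArg ContinuousLinearMap.adjoint hM
    rw [ContinuousLinearMap.adjoint_comp, ContinuousLinearMap.adjoint_comp, bsa, dsa] at this
    simpa [hmul] using this
  have hJ' : (ContinuousLinearMap.adjoint J) * QThalf = QTmshalf := by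
    have := congrArg ContinuousLinearMap.adjoint hJ
    rw [ContinuousLinearMap.adjoint_comp, csa, bsa] at this
    simpa [hmul] using this
  -- set P = Vs Vs†, R = J J†
  set P : H →L[ℝ] H := Vs * ContinuousLinearMap.adjoint Vs with hP
  set R : H →L[ℝ] H := J * ContinuousLinearMap.adjoint J with hR
  have hVsm : QThalf * Vs = S * Qshalf := by simpa [hmul] using hVs
  have hMm : QTmshalf * M = S * Qhathalf := by simpa [hmul] using hM
  have hJm : QThalf * J = QTmshalf := by simpa [hmul] using hJ
  -- key: 1 = R + P
  have hRP : (1 : H →L[ℝ] H) = R + P := by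
    have h1 : QThalf * ((1 : H →L[ℝ] H) * QThalf) = QThalf * ((R + P) * QThalf) := by
      have e1 : QThalf * (R * QThalf) = QTms := by
        calc QThalf * (R * QThalf) = (QThalf * J) * ((ContinuousLinearMap.adjoint J) * QThalf) := by
              rw [hR]; noncomm_ring
          _ = QTmshalf * QTmshalf := by rw [hJm, hJ']
          _ = QTms := by simpa [hmul] using hQTmshalf_sq
      have e2 : QThalf * (P * QThalf)
          = S * (Qs * ContinuousLinearMap.adjoint S) := by
        calc QThalf * (P * QThalf)
            = (QThalf * Vs) * ((ContinuousLinearMap.adjoint Vs) * QThalf) := by rw [hP]; noncomm_ring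
          _ = (S * Qshalf) * (Qshalf * ContinuousLinearMap.adjoint S) := by rw [hVsm, hVs']
          _ = S * ((Qshalf * Qshalf) * ContinuousLinearMap.adjoint S) := by noncomm_ring
          _ = S * (Qs * ContinuousLinearMap.adjoint S) := by
              rw [show Qshalf * Qshalf = Qs from by simpa [hmul] using hQshalf_sq]
      have e0 : QThalf * ((1 : H →L[ℝ] H) * QThalf) = QT := by
        simpa [hmul] using hQThalf_sq
      have expand : QThalf * ((R + P) * QThalf)
          = QThalf * (R * QThalf) + QThalf * (P * QThalf) := by noncomm_ring
      rw [e0, expand, e1, e2]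
      simpa [hmul] using hid
    have h2 : (1 : H →L[ℝ] H) * QThalf = (R + P) * QThalf := by
      apply aux_cancel_left hQThalf_inj
      simpa [hmul] using h1
    apply aux_cancel_right hdenseT
    simpa [hmul] using h2
  -- main identity
  have hkey : M * ContinuousLinearMap.adjoint M
      = (1 : H →L[ℝ] H) - (ContinuousLinearMap.adjoint J) * J := by
    have h1 : QTmshalf * ((M * ContinuousLinearMap.adjoint M) * QTmshalf)
        = QTmshalf * (((1 : H →L[ℝ] H) - (ContinuousLinearMap.adjoint J) * J) * QTmshalf) := by
      have lhs1 : QTmshalf * ((M * ContinuousLinearMap.adjoint M) * QTmshalf)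
          = S * (Qhat * ContinuousLinearMap.adjoint S) := by
        calc QTmshalf * ((M * ContinuousLinearMap.adjoint M) * QTmshalf)
            = (QTmshalf * M) * ((ContinuousLinearMap.adjoint M) * QTmshalf) := by noncomm_ring
          _ = (S * Qhathalf) * (Qhathalf * ContinuousLinearMap.adjoint S) := by rw [hMm, hM']
          _ = S * ((Qhathalf * Qhathalf) * ContinuousLinearMap.adjoint S) := by noncomm_ring
          _ = S * (Qhat * ContinuousLinearMap.adjoint S) := by
              rw [show Qhathalf * Qhathalf = Qhat from by simpa [hmul] using hQhathalf_sq]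
      have lhs2 : S * (Qhat * ContinuousLinearMap.adjoint S)
          = QThalf * ((P - P * P) * QThalf) := by
        have hQhatm : Qhat = Qshalf * Qshalf
            - Qshalf * ((ContinuousLinearMap.adjoint Vs * Vs) * Qshalf) := by
          rw [show Qshalf * Qshalf = Qs from by simpa [hmul] using hQshalf_sq]
          simpa [hmul, mul_assoc] using hQhat
        calc S * (Qhat * ContinuousLinearMap.adjoint S)
            = (S * Qshalf) * (Qshalf * ContinuousLinearMap.adjoint S)
              - ((S * Qshalf) * ContinuousLinearMap.adjoint Vs)
                * (Vs * (Qshalf * ContinuousLinearMap.adjoint S)) := by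
              rw [hQhatm]; noncomm_ring
          _ = (QThalf * Vs) * ((ContinuousLinearMap.adjoint Vs) * QThalf)
              - ((QThalf * Vs) * ContinuousLinearMap.adjoint Vs)
                * (Vs * ((ContinuousLinearMap.adjoint Vs) * QThalf)) := by
              rw [hVsm, hVs']
          _ = QThalf * ((P - P * P) * QThalf) := by rw [hP]; noncomm_ring
      have rhs1 : QTmshalf * (((1 : H →L[ℝ] H) - (ContinuousLinearMap.adjoint J) * J) * QTmshalf)
          = QThalf * ((R - R * R) * QThalf) := by
        calc QTmshalf * (((1 : H →L[ℝ] H) - (ContinuousLinearMap.adjoint J) * J) * QTmshalf)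
            = QTmshalf * QTmshalf
              - (QTmshalf * ContinuousLinearMap.adjoint J) * (J * QTmshalf) := by noncomm_ring
          _ = (QThalf * J) * ((ContinuousLinearMap.adjoint J) * QThalf)
              - ((QThalf * J) * ContinuousLinearMap.adjoint J)
                * (J * ((ContinuousLinearMap.adjoint J) * QThalf)) := by
              rw [hJm, hJ']
          _ = QThalf * ((R - R * R) * QThalf) := by rw [hR]; noncomm_ring
      rw [lhs1, lhs2, rhs1]
      have hPR : P = 1 - R := by rw [hRP]; noncomm_ring
      rw [hPR]; noncomm_ring
    have h2 : (M * ContinuousLinearMap.adjoint M) * QTmshalf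
        = ((1 : H →L[ℝ] H) - (ContinuousLinearMap.adjoint J) * J) * QTmshalf := by
      apply aux_cancel_left hQTmshalf_inj
      simpa [hmul] using h1
    apply aux_cancel_right hdenseTm
    simpa [hmul] using h2
  have hkey' : M.comp (ContinuousLinearMap.adjoint M)
      = (1 : H →L[ℝ] H) - (ContinuousLinearMap.adjoint J).comp J := by
    simpa [hmul] using hkey
  refine ⟨hkey', ?_, ?_⟩
  · have := (isPositive_one (E := H) (𝕜 := ℝ)).conj_adjoint M
    convert this using 1; ext x; rfl
  · rw [hkey']
    have := (isPositive_one (E := H) (𝕜 := ℝ)).adjoint_conj J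
    convert this using 1; ext x; simp
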